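/- If (f(x,t), g(x,t))ᵀ solves the linear system Ψ_x = U Ψ, Ψ_t = V Ψ with spectral parameter λ, where U = [[λ, u],[−ε û, −λ]] and V = [[−2iλ² − iε u û, −2iλu − i u_x],[2iελ û − iε û_x, 2iλ² + iε u û]] and û(x,t) := u*(−x,t), then the pair (ĝ(x,t), ε f̂(x,t))ᵀ := (g*(−x,t), ε f*(−x,t))ᵀ solves the same linear system with λ replaced by λ*. -/

import Mathlib

open Complex

/-- If `(f, g)ᵀ` solves the Lax pair of the nonlocal NLS equation with spectral
parameter `λ`, then `(ĝ, ε f̂)ᵀ = (g*(−x,t), ε f*(−x,t))ᵀ` solves the same linear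
system with `λ` replaced by `λ*`. -/
theorem lax_pair_nonlocal_symmetry (ε lam : ℂ) (hε : ε = 1 ∨ ε = -1)
    (u ux f g : ℝ → ℝ → ℂ)
    (hux : ∀ x t : ℝ, HasDerivAt (fun y : ℝ => u y t) (ux x t) x)
    (hfx : ∀ x t : ℝ, HasDerivAt (fun y : ℝ => f y t)
      (lam * f x t + u x t * g x t) x)
    (hgx : ∀ x t : ℝ, HasDerivAt (fun y : ℝ => g y t)
      (-ε * (starRingEnd ℂ) (u (-x) t) * f x t - lam * g x t) x)
    (hft : ∀ x t : ℝ, HasDerivAt (fun s : ℝ => f x s)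
      ((-(2 * Complex.I * lam ^ 2) - Complex.I * ε * u x t * (starRingEnd ℂ) (u (-x) t)) * f x t
        + (-(2 * Complex.I * lam * u x t) - Complex.I * ux x t) * g x t) t)
    (hgt : ∀ x t : ℝ, HasDerivAt (fun s : ℝ => g x s)
      ((2 * Complex.I * ε * lam * (starRingEnd ℂ) (u (-x) t)
          - Complex.I * ε * (-(starRingEnd ℂ) (ux (-x) t))) * f x t
        + (2 * Complex.I * lam ^ 2 + Complex.I * ε * u x t * (starRingEnd ℂ) (u (-x) t)) * g x t) t) :
    ∀ x t : ℝ,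
      HasDerivAt (fun y : ℝ => (starRingEnd ℂ) (g (-y) t))
        ((starRingEnd ℂ) lam * (starRingEnd ℂ) (g (-x) t)
          + u x t * (ε * (starRingEnd ℂ) (f (-x) t))) x ∧
      HasDerivAt (fun y : ℝ => ε * (starRingEnd ℂ) (f (-y) t))
        (-ε * (starRingEnd ℂ) (u (-x) t) * (starRingEnd ℂ) (g (-x) t)
          - (starRingEnd ℂ) lam * (ε * (starRingEnd ℂ) (f (-x) t))) x ∧
      HasDerivAt (fun s : ℝ => (starRingEnd ℂ) (g (-x) s))
        ((-(2 * Complex.I * ((starRingEnd ℂ) lam) ^ 2)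
            - Complex.I * ε * u x t * (starRingEnd ℂ) (u (-x) t)) * (starRingEnd ℂ) (g (-x) t)
          + (-(2 * Complex.I * (starRingEnd ℂ) lam * u x t) - Complex.I * ux x t)
            * (ε * (starRingEnd ℂ) (f (-x) t))) t ∧
      HasDerivAt (fun s : ℝ => ε * (starRingEnd ℂ) (f (-x) s))
        ((2 * Complex.I * ε * (starRingEnd ℂ) lam * (starRingEnd ℂ) (u (-x) t)
            - Complex.I * ε * (-(starRingEnd ℂ) (ux (-x) t))) * (starRingEnd ℂ) (g (-x) t)
          + (2 * Complex.I * ((starRingEnd ℂ) lam) ^ 2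
            + Complex.I * ε * u x t * (starRingEnd ℂ) (u (-x) t))
            * (ε * (starRingEnd ℂ) (f (-x) t))) t := by
  intro x t
  have key : ∀ z : ℂ, (starRingEnd ℂ) z = star z := fun z => rfl
  refine ⟨?_, ?_, ?_, ?_⟩
  · have h := (HasDerivAt.scomp x (hgx (-x) t) (hasDerivAt_neg x)).star
    simp only [neg_neg, Function.comp] at h
    refine HasDerivAt.congr_deriv h (Eq.symm ?_)
    simp only [← starRingEnd_apply, star_smul, neg_one_smul, map_neg, map_mul, map_sub,
      Complex.conj_conj]
    rcases hε with h1 | h1 <;> subst h1 <;> simp <;> ring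
  · have h := ((HasDerivAt.scomp x (hfx (-x) t) (hasDerivAt_neg x)).star).const_mul ε
    simp only [neg_neg, Function.comp] at h
    refine HasDerivAt.congr_deriv h (Eq.symm ?_)
    simp only [← starRingEnd_apply, star_smul, neg_one_smul, map_neg, map_mul, map_add,
      Complex.conj_conj]
    rcases hε with h1 | h1 <;> subst h1 <;> simp <;> ring
  · have h := ((hgt (-x) t).star)
    simp only [neg_neg] at h
    refine HasDerivAt.congr_deriv h (Eq.symm ?_)
    simp only [← starRingEnd_apply, map_neg, map_mul, map_add, map_sub, map_pow, map_ofNat,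
      Complex.conj_conj, Complex.conj_I]
    rcases hε with h1 | h1 <;> subst h1 <;> simp <;> ring
  · have h := (((hft (-x) t).star).const_mul ε)
    simp only [neg_neg] at h
    refine HasDerivAt.congr_deriv h (Eq.symm ?_)
    simp only [← starRingEnd_apply, map_neg, map_mul, map_add, map_sub, map_pow, map_ofNat,
      Complex.conj_conj, Complex.conj_I]
    rcases hε with h1 | h1 <;> subst h1 <;> simp <;> ring
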